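/- Let κ be a cardinal of uncountable cofinality, X a Banach space of density κ, Y ⊆ X a closed subspace of density < κ, and y* ∈ S_{Y*} such that every norm-one extension x* ∈ E(y*) of y* to X has character κ in B_{X*} with the weak* topology. Suppose D ⊆ X has cardinality κ and D \ E is linearly dense in X for every E ⊆ D with |E| < κ. Then there exist x* ∈ S_{X*}, a subset D' ⊆ D of cardinality κ, and r ∈ ℝ such that x*(d) = r for all d ∈ D'. Consequently X does not admit an overcomplete set. -/

import Mathlib

open Cardinal Set

universe u

/-- The density character of a topological space: the least cardinality of a dense subset. -/
noncomputable def dens (X : Type u) [TopologicalSpace X] : Cardinal.{u} :=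
  ⨅ s : {s : Set X // Dense s}, Cardinal.mk ↥(s.1)

/-- A set is linearly dense if its closed linear span is the whole space. -/
def LinearlyDense {X : Type u} [NormedAddCommGroup X] [NormedSpace ℝ X] (S : Set X) : Prop :=
  (Submodule.span ℝ S).topologicalClosure = ⊤

/-- A set `Y` is overcomplete in `X` if `|Y| = dens X` and every subset of `Y` of full
cardinality is linearly dense in `X`. -/
def Overcomplete {X : Type u} [NormedAddCommGroup X] [NormedSpace ℝ X] (Y : Set X) : Prop :=
  Cardinal.mk ↥Y = dens X ∧ ∀ Z ⊆ Y, Cardinal.mk ↥Z = Cardinal.mk ↥Y → LinearlyDense Z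

/-- The character of the point `x` relative to the subspace `A ⊆ T` (with the subspace
topology): the least cardinality of a family `B` of open neighbourhoods of `x` such that
every open neighbourhood of `x` contains some `V ∩ A` with `V ∈ B`. -/
noncomputable def relChar {T : Type u} [TopologicalSpace T] (A : Set T) (x : T) : Cardinal.{u} :=
  sInf {c | ∃ B : Set (Set T), Cardinal.mk ↥B = c ∧ (∀ V ∈ B, x ∈ V ∧ IsOpen V) ∧
    ∀ U : Set T, IsOpen U → x ∈ U → ∃ V ∈ B, V ∩ A ⊆ U}

/-- The closed unit ball of the dual of `X`, as a subset of the weak* dual. -/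
def dualBall (X : Type u) [NormedAddCommGroup X] [NormedSpace ℝ X] : Set (WeakDual ℝ X) :=
  {φ | ‖WeakDual.toStrongDual φ‖ ≤ 1}

section AuxOvercomplete

variable {X : Type u} [NormedAddCommGroup X] [NormedSpace ℝ X]

/-- norm-one extensions of `ys`, inside the weak* dual. -/
def ExtSet (Y : Submodule ℝ X) (ys : Y →L[ℝ] ℝ) : Set (WeakDual ℝ X) :=
  {ψ | ‖WeakDual.toStrongDual ψ‖ ≤ 1 ∧ ∀ y : Y, ψ (y : X) = ys y}

lemma extSet_subset_ball (Y : Submodule ℝ X) (ys : Y →L[ℝ] ℝ) :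
    ExtSet Y ys ⊆ dualBall X := fun _ h => h.1

lemma norm_le_of_ext {Y : Submodule ℝ X} {ys : Y →L[ℝ] ℝ} (φ : X →L[ℝ] ℝ)
    (h : ∀ y : Y, φ (y : X) = ys y) : ‖ys‖ ≤ ‖φ‖ := by
  refine ContinuousLinearMap.opNorm_le_bound ys (norm_nonneg φ) (fun y => ?_)
  have : ys y = φ (y : X) := (h y).symm
  rw [this]
  calc ‖φ (y : X)‖ ≤ ‖φ‖ * ‖(y : X)‖ := φ.le_opNorm _
  _ = ‖φ‖ * ‖y‖ := rfl

lemma norm_eq_one_of_mem_extSet {Y : Submodule ℝ X} {ys : Y →L[ℝ] ℝ} (hys : ‖ys‖ = 1)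
    {ψ : WeakDual ℝ X} (h : ψ ∈ ExtSet Y ys) : ‖WeakDual.toStrongDual ψ‖ = 1 :=
  le_antisymm h.1 (hys ▸ norm_le_of_ext _ h.2)

lemma dualBall_eq : dualBall X = WeakDual.toStrongDual ⁻¹' Metric.closedBall 0 1 := by
  ext ψ; simp [dualBall, Metric.mem_closedBall, dist_zero_right]

lemma isCompact_dualBall : IsCompact (dualBall X) := by
  rw [dualBall_eq]; exact WeakDual.isCompact_closedBall (𝕜 := ℝ) (x' := 0) (r := 1)

lemma isClosed_dualBall : IsClosed (dualBall X) := by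
  rw [dualBall_eq]; exact WeakDual.isClosed_closedBall (𝕜 := ℝ) (x' := 0) (r := 1)

lemma isClosed_extSet (Y : Submodule ℝ X) (ys : Y →L[ℝ] ℝ) : IsClosed (ExtSet Y ys) := by
  have : ExtSet Y ys = dualBall X ∩ ⋂ y : Y, {ψ : WeakDual ℝ X | ψ (y : X) = ys y} := by
    ext ψ; simp [ExtSet, dualBall, Set.mem_iInter]
  rw [this]
  exact isClosed_dualBall.inter (isClosed_iInter (fun y =>
    (isClosed_singleton (x := ys y)).preimage (WeakDual.eval_continuous (y : X))))

lemma isCompact_extSet (Y : Submodule ℝ X) (ys : Y →L[ℝ] ℝ) : IsCompact (ExtSet Y ys) :=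
  IsCompact.of_isClosed_subset isCompact_dualBall (isClosed_extSet Y ys)
    (extSet_subset_ball Y ys)

lemma extSet_nonempty (Y : Submodule ℝ X) (ys : Y →L[ℝ] ℝ) (hys : ‖ys‖ = 1) :
    (ExtSet Y ys).Nonempty := by
  obtain ⟨g, hg, hgn⟩ := exists_extension_norm_eq Y ys
  refine ⟨StrongDual.toWeakDual g, ?_, fun y => hg y⟩
  show ‖g‖ ≤ 1
  rw [hgn, hys]


lemma exists_dense_card (W : Type u) [TopologicalSpace W] :
    ∃ s : Set W, Dense s ∧ #s = dens W := by
  have hne : Nonempty {s : Set W // Dense s} := ⟨⟨Set.univ, dense_univ⟩⟩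
  have h := csInf_mem (Set.range_nonempty
    (fun s : {s : Set W // Dense s} => #↥(s.1)))
  obtain ⟨p, hp⟩ := h
  exact ⟨p.1, p.2, hp⟩

lemma mk_finset_le_max (α : Type u) : #(Finset α) ≤ max ℵ₀ #α :=
  calc #(Finset α) ≤ #(Multiset α) := mk_le_of_injective Finset.val_injective
  _ ≤ #(List α) := mk_quotient_le
  _ ≤ max ℵ₀ #α := mk_list_le_max α

lemma exists_other_ext {κ : Cardinal.{u}} (hcf : Cardinal.aleph0 < (κ.ord).cof)
    (Y : Submodule ℝ X) (hYd : dens Y < κ) (ys : Y →L[ℝ] ℝ) (hys : ‖ys‖ = 1)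
    (hchar : ∀ φ : X →L[ℝ] ℝ, ‖φ‖ = 1 → (∀ y : Y, φ (y : X) = ys y) →
      relChar (dualBall X) (StrongDual.toWeakDual φ) = κ)
    (φw : WeakDual ℝ X) (hφw : φw ∈ ExtSet Y ys)
    (A : Set X) (hA : #A < κ) :
    ∃ ψ ∈ ExtSet Y ys, ψ ≠ φw ∧ ∀ a ∈ A, ψ a = φw a := by
  classical
  by_contra hcon
  push_neg at hcon
  have huniq : ∀ ψ, ψ ∈ ExtSet Y ys → (∀ a ∈ A, ψ a = φw a) → ψ = φw := by
    intro ψ hψ hag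
    by_contra hne
    obtain ⟨a, ha, hne'⟩ := hcon ψ hψ hne
    exact hne' (hag a ha)
  have hκ0 : (ℵ₀ : Cardinal.{u}) < κ := hcf.trans_le (Ordinal.cof_ord_le κ)
  set φ : X →L[ℝ] ℝ := WeakDual.toStrongDual φw with hφdef
  have hφ1 : ‖φ‖ = 1 := norm_eq_one_of_mem_extSet hys hφw
  have hrelchar : relChar (dualBall X) (StrongDual.toWeakDual φ) = κ :=
    hchar φ hφ1 hφw.2
  have hxw : StrongDual.toWeakDual φ = φw := rfl
  obtain ⟨s, hsdense, hscard⟩ := exists_dense_card ↥Y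
  set I : Set X := A ∪ (Subtype.val '' s) with hI
  have hIcard : #I < κ := by
    refine lt_of_le_of_lt (mk_union_le _ _) (Cardinal.add_lt_of_lt hκ0.le hA ?_)
    exact lt_of_le_of_lt mk_image_le (hscard ▸ hYd)
  set V : Finset ↥I → ℕ → Set (WeakDual ℝ X) := fun F n =>
    {ψ | ∀ x ∈ F, ψ (x : X) ∈ Metric.ball (φ (x : X)) (1/(n+1))} with hV
  set B : Set (Set (WeakDual ℝ X)) := Set.range (fun p : Finset ↥I × ℕ => V p.1 p.2) with hB
  have hmemV : ∀ (F : Finset ↥I) (n : ℕ), StrongDual.toWeakDual φ ∈ V F n := by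
    intro F n x hx
    have : (0:ℝ) < 1/(n+1) := by positivity
    exact Metric.mem_ball_self this
  have hopenV : ∀ F n, IsOpen (V F n) := by
    intro F n
    have hVeq : V F n = ⋂ x ∈ F,
        (fun ψ : WeakDual ℝ X => ψ (x : X)) ⁻¹' (Metric.ball (φ (x : X)) (1/(n+1))) := by
      ext ψ; simp [hV]
    rw [hVeq]
    exact isOpen_biInter_finset fun x _ =>
      (Metric.isOpen_ball).preimage (WeakDual.eval_continuous _)
  have hbase : ∀ U : Set (WeakDual ℝ X), IsOpen U → StrongDual.toWeakDual φ ∈ U →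
      ∃ Vb ∈ B, Vb ∩ dualBall X ⊆ U := by
    intro U hU hxU
    set K := dualBall X \ U with hK
    have hKcomp : IsCompact K := isCompact_dualBall.diff hU
    have hwit : ∀ ψ : ↥K, ∃ x : ↥I, ψ.1 (x : X) ≠ φ (x : X) := by
      rintro ⟨ψ, hψmem⟩
      by_contra hagree
      push_neg at hagree
      have hYagree : ∀ y : Y, ψ (y : X) = ys y := by
        have heq : ⇑((WeakDual.toStrongDual ψ).comp Y.subtypeL) = ⇑(φ.comp Y.subtypeL) := by
          refine Continuous.ext_on hsdense (ContinuousLinearMap.continuous _)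
            (ContinuousLinearMap.continuous _) ?_
          intro y hy
          exact hagree ⟨(y : X), Or.inr ⟨y, hy, rfl⟩⟩
        intro y
        have := congrFun heq y
        simp only [ContinuousLinearMap.comp_apply] at this
        calc ψ (y : X) = φ (y : X) := this
        _ = ys y := hφw.2 y
      have hψExt : ψ ∈ ExtSet Y ys := ⟨hψmem.1, hYagree⟩
      have hψA : ∀ a ∈ A, ψ a = φw a := by
        intro a ha
        exact hagree ⟨a, Or.inl ha⟩
      have := huniq ψ hψExt hψA
      rw [this] at hψmem
      exact hψmem.2 (hxw ▸ hxU)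
    choose xi hxi using hwit
    set δ : ↥K → ℝ := fun ψ => dist (ψ.1 ((xi ψ : X))) (φ ((xi ψ : X))) with hδ
    have hδpos : ∀ ψ, 0 < δ ψ := fun ψ => dist_pos.mpr (hxi ψ)
    set W : ↥K → Set (WeakDual ℝ X) := fun ψ =>
      {χ | δ ψ / 2 < dist (χ ((xi ψ : X))) (φ ((xi ψ : X)))} with hW
    have hWopen : ∀ ψ, IsOpen (W ψ) := by
      intro ψ
      have : W ψ = (fun χ : WeakDual ℝ X => χ ((xi ψ : X))) ⁻¹'
          {t | δ ψ / 2 < dist t (φ ((xi ψ : X)))} := rfl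
      rw [this]
      exact (isOpen_lt continuous_const (continuous_id.dist continuous_const)).preimage
        (WeakDual.eval_continuous _)
    have hcover : K ⊆ ⋃ ψ : ↥K, W ψ := by
      intro χ hχ
      exact Set.mem_iUnion.mpr ⟨⟨χ, hχ⟩, half_lt_self (hδpos ⟨χ, hχ⟩)⟩
    obtain ⟨T, hT⟩ := hKcomp.elim_finite_subcover W hWopen hcover
    rcases T.eq_empty_or_nonempty with hTe | hTn
    · refine ⟨V ∅ 0, ⟨(∅, 0), rfl⟩, ?_⟩
      rintro χ ⟨-, hχb⟩
      by_contra hχU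
      have : χ ∈ ⋃ ψ ∈ T, W ψ := hT ⟨hχb, hχU⟩
      simp [hTe] at this
    · set ε := T.inf' hTn (fun ψ => δ ψ / 2) with hε
      have hεpos : 0 < ε := by
        rw [hε, Finset.lt_inf'_iff]
        exact fun ψ _ => half_pos (hδpos ψ)
      obtain ⟨n, hn⟩ := exists_nat_one_div_lt hεpos
      refine ⟨V (T.image xi) n, ⟨(T.image xi, n), rfl⟩, ?_⟩
      rintro χ ⟨hχV, hχb⟩
      by_contra hχU
      have hmem : χ ∈ ⋃ ψ ∈ T, W ψ := hT ⟨hχb, hχU⟩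
      obtain ⟨ψ, hψT, hχW⟩ := Set.mem_iUnion₂.mp hmem
      have h1 : dist (χ ((xi ψ : X))) (φ ((xi ψ : X))) < 1/(n+1) := by
        have := hχV (xi ψ) (Finset.mem_image_of_mem xi hψT)
        simpa [Metric.mem_ball] using this
      have h2 : ε ≤ δ ψ / 2 := Finset.inf'_le _ hψT
      have h3 : δ ψ / 2 < dist (χ ((xi ψ : X))) (φ ((xi ψ : X))) := hχW
      linarith
  have hrel_le : relChar (dualBall X) (StrongDual.toWeakDual φ) ≤ #B := by
    refine csInf_le' ?_
    refine ⟨B, rfl, ?_, hbase⟩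
    rintro Vb ⟨p, rfl⟩
    exact ⟨hmemV p.1 p.2, hopenV p.1 p.2⟩
  have hBlt : #B < κ := by
    have h1 : #B ≤ #(Finset ↥I × ℕ) := mk_range_le
    have h2 : #(Finset ↥I × ℕ) = #(Finset ↥I) * ℵ₀ := by simp [Cardinal.mk_prod]
    have h3 : #(Finset ↥I) ≤ max ℵ₀ #↥I := mk_finset_le_max ↥I
    have h4 : #B ≤ max ℵ₀ #↥I * max ℵ₀ #↥I := by
      calc #B ≤ #(Finset ↥I) * ℵ₀ := h2 ▸ h1
      _ ≤ max ℵ₀ #↥I * max ℵ₀ #↥I :=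
        mul_le_mul' h3 (le_max_left _ _)
    have h5 : max ℵ₀ #↥I * max ℵ₀ #↥I = max ℵ₀ #↥I :=
      Cardinal.mul_eq_self (le_max_left _ _)
    exact lt_of_le_of_lt (h4.trans h5.le) (max_lt hκ0 hIcard)
  rw [hrelchar] at hrel_le
  exact absurd (lt_of_le_of_lt hrel_le hBlt) (lt_irrefl κ)


lemma eq_zero_of_vanish_linearlyDense {S : Set X} (hS : LinearlyDense S) {f : X →L[ℝ] ℝ}
    (hf : ∀ x ∈ S, f x = 0) : f = 0 := by
  have h1 : Submodule.span ℝ S ≤ f.ker :=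
    Submodule.span_le.mpr (fun x hx => by simpa using hf x hx)
  have h2 : (Submodule.span ℝ S).topologicalClosure ≤ f.ker :=
    Submodule.topologicalClosure_minimal _ h1 (ContinuousLinearMap.isClosed_ker f)
  rw [hS] at h2
  ext x
  simpa using h2 (Submodule.mem_top (x := x))

lemma exists_fiber_card {κ : Cardinal.{u}} (hcf : Cardinal.aleph0 < (κ.ord).cof)
    {E : Set X} {S : Set ℝ} (hSc : S.Countable) (hSne : S.Nonempty) (f : X → ℝ)
    (hf : ∀ x ∈ E, f x ∈ S) (hE : #E = κ) :
    ∃ r ∈ S, #{x ∈ E | f x = r} = κ := by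
  obtain ⟨g, hg⟩ := Set.Countable.exists_eq_range hSc hSne
  by_contra hcon
  push_neg at hcon
  have hκ0 : (ℵ₀ : Cardinal.{u}) < κ := hcf.trans_le (Ordinal.cof_ord_le κ)
  have hsub : E ⊆ ⋃ n : ULift.{u} ℕ, {x ∈ E | f x = g n.down} := by
    intro x hx
    have hfx : f x ∈ S := hf x hx
    rw [hg] at hfx
    obtain ⟨n, hn⟩ := hfx
    exact Set.mem_iUnion.mpr ⟨ULift.up n, hx, hn.symm⟩
  have hfib : ∀ n : ULift.{u} ℕ, #{x ∈ E | f x = g n.down} < κ := by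
    intro n
    have hmem : g n.down ∈ S := hg ▸ ⟨n.down, rfl⟩
    refine lt_of_le_of_ne ?_ (hcon _ hmem)
    exact (mk_le_mk_of_subset (fun x hx => hx.1)).trans hE.le
  have hsup : (⨆ n : ULift.{u} ℕ, #{x ∈ E | f x = g n.down}) < κ :=
    Ordinal.iSup_lt (by simpa using hcf) hfib
  have hle : #E ≤ ℵ₀ * ⨆ n : ULift.{u} ℕ, #{x ∈ E | f x = g n.down} := by
    calc #E ≤ #(⋃ n : ULift.{u} ℕ, {x ∈ E | f x = g n.down}) := mk_le_mk_of_subset hsub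
    _ ≤ #(ULift.{u} ℕ) * ⨆ n : ULift.{u} ℕ, #{x ∈ E | f x = g n.down} := mk_iUnion_le _
    _ = ℵ₀ * ⨆ n : ULift.{u} ℕ, #{x ∈ E | f x = g n.down} := by simp
  rw [hE] at hle
  exact absurd (lt_of_le_of_lt hle (Cardinal.mul_lt_of_lt hκ0.le hκ0 hsup)) (lt_irrefl κ)

lemma key_lemma {κ : Cardinal.{u}} (hcf : Cardinal.aleph0 < (κ.ord).cof)
    (Y : Submodule ℝ X) (hYd : dens Y < κ) (ys : Y →L[ℝ] ℝ) (hys : ‖ys‖ = 1)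
    (hchar : ∀ φ : X →L[ℝ] ℝ, ‖φ‖ = 1 → (∀ y : Y, φ (y : X) = ys y) →
      relChar (dualBall X) (StrongDual.toWeakDual φ) = κ)
    (D : Set X) (hDcard : #D = κ)
    (hDdense : ∀ E ⊆ D, #E < κ → LinearlyDense (D \ E))
    (S : Set ℝ) (hSc : S.Countable)
    (hSd : ∀ a b : ℝ, a < b → ∃ q ∈ S, a < q ∧ q < b) :
    ∃ φ : X →L[ℝ] ℝ, ‖φ‖ = 1 ∧ (∀ y : Y, φ (y : X) = ys y) ∧
      ∃ D' ⊆ D, #D' = κ ∧ ∃ r ∈ S, ∀ d ∈ D', φ d = r := by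
  classical
  have hκ0 : (ℵ₀ : Cardinal.{u}) < κ := hcf.trans_le (Ordinal.cof_ord_le κ)
  have hDld : LinearlyDense D := by
    have h0 : #(∅ : Set X) < κ := by
      simpa using lt_of_le_of_lt (aleph0_pos.le) hκ0
    simpa using hDdense ∅ (Set.empty_subset D) h0
  set 𝒮 : Set (Set (X × ℝ)) :=
    {s | (∀ p ∈ s, p.1 ∈ D ∧ p.2 ∈ S) ∧ ∃ ψ ∈ ExtSet Y ys, ∀ p ∈ s, ψ p.1 = p.2} with h𝒮
  have hempty : (∅ : Set (X × ℝ)) ∈ 𝒮 := by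
    obtain ⟨ψ0, hψ0⟩ := extSet_nonempty Y ys hys
    exact ⟨fun p hp => absurd hp (Set.notMem_empty p),
      ψ0, hψ0, fun p hp => absurd hp (Set.notMem_empty p)⟩
  have hzorn : ∀ c ⊆ 𝒮, IsChain (· ⊆ ·) c → c.Nonempty →
      ∃ ub ∈ 𝒮, ∀ s ∈ c, s ⊆ ub := by
    intro c hc𝒮 hchain hcne
    haveI : Nonempty ↥c := hcne.to_subtype
    set C : ↥c → Set (WeakDual ℝ X) := fun s =>
      {ψ | ψ ∈ ExtSet Y ys ∧ ∀ p ∈ s.1, ψ p.1 = p.2} with hC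
    have hCne : ∀ s : ↥c, (C s).Nonempty := by
      rintro ⟨s, hs⟩
      obtain ⟨ψ, hψ, hval⟩ := (hc𝒮 hs).2
      exact ⟨ψ, hψ, hval⟩
    have hCclosed : ∀ s : ↥c, IsClosed (C s) := by
      intro s
      have hCeq : C s = ExtSet Y ys ∩ ⋂ p ∈ s.1, {ψ : WeakDual ℝ X | ψ p.1 = p.2} := by
        ext ψ; simp [hC]
      rw [hCeq]
      refine (isClosed_extSet Y ys).inter (isClosed_biInter fun p _ => ?_)
      exact IsClosed.preimage (WeakDual.eval_continuous p.1) isClosed_singleton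
    have hCcomp : ∀ s : ↥c, IsCompact (C s) := fun s =>
      IsCompact.of_isClosed_subset (isCompact_extSet Y ys) (hCclosed s) (fun ψ hψ => hψ.1)
    have hCdir : Directed (· ⊇ ·) C := by
      intro s t
      rcases eq_or_ne s t with rfl | hst
      · exact ⟨s, subset_rfl, subset_rfl⟩
      · rcases hchain.total s.2 t.2 with h | h
        · exact ⟨t, fun ψ hψ => ⟨hψ.1, fun p hp => hψ.2 p (h hp)⟩, subset_rfl⟩
        · exact ⟨s, subset_rfl, fun ψ hψ => ⟨hψ.1, fun p hp => hψ.2 p (h hp)⟩⟩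
    obtain ⟨ψs, hψs⟩ := IsCompact.nonempty_iInter_of_directed_nonempty_isCompact_isClosed
      C hCdir hCne hCcomp hCclosed
    have hψsmem : ∀ s : ↥c, ψs ∈ C s := by
      intro s; exact Set.mem_iInter.mp hψs s
    refine ⟨⋃₀ c, ⟨?_, ?_⟩, fun s hs => Set.subset_sUnion_of_mem hs⟩
    · rintro p ⟨s, hs, hps⟩; exact (hc𝒮 hs).1 p hps
    · obtain ⟨s0, hs0⟩ := hcne
      refine ⟨ψs, (hψsmem ⟨s0, hs0⟩).1, ?_⟩
      rintro p ⟨s, hs, hps⟩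
      exact (hψsmem ⟨s, hs⟩).2 p hps
  obtain ⟨M, -, hMmax⟩ := zorn_subset_nonempty 𝒮 hzorn ∅ hempty
  obtain ⟨hMDS, ψM, hψMExt, hψMval⟩ := hMmax.1
  set φ : X →L[ℝ] ℝ := WeakDual.toStrongDual ψM with hφdef
  set E : Set X := Prod.fst '' M with hE
  have hED : E ⊆ D := by rintro x ⟨p, hp, rfl⟩; exact (hMDS p hp).1
  have hEκ : #E = κ := by
    by_contra hne
    have hlt : #E < κ := lt_of_le_of_ne ((mk_le_mk_of_subset hED).trans hDcard.le) hne
    obtain ⟨ψ', hψ'Ext, hψ'ne, hψ'ag⟩ :=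
      exists_other_ext hcf Y hYd ys hys hchar ψM hψMExt E hlt
    set f : X →L[ℝ] ℝ := WeakDual.toStrongDual ψM - WeakDual.toStrongDual ψ' with hf
    have hfne : f ≠ 0 := by
      intro h0
      exact hψ'ne (WeakDual.toStrongDual.injective (sub_eq_zero.mp h0)).symm
    have hfE : ∀ x ∈ E, f x = 0 := by
      intro x hx
      have h2 : ψ' x = ψM x := hψ'ag x hx
      simp only [hf, ContinuousLinearMap.sub_apply]
      exact sub_eq_zero.mpr h2.symm
    have hexd : ∃ d ∈ D, f d ≠ 0 := by
      by_contra hall; push_neg at hall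
      exact hfne (eq_zero_of_vanish_linearlyDense hDld hall)
    obtain ⟨d, hdD, hdne⟩ := hexd
    have hdE : d ∉ E := fun hdE => hdne (hfE d hdE)
    set a : ℝ := ψM d with ha
    set b : ℝ := ψ' d with hb
    have hab : a ≠ b := by
      intro h
      apply hdne
      simp only [hf, ContinuousLinearMap.sub_apply]
      exact sub_eq_zero.mpr h
    obtain ⟨q, hqS, hq1, hq2⟩ := hSd (min a b) (max a b) (min_lt_max.mpr hab)
    set t : ℝ := (q - a)/(b - a) with htdef
    have hba : b - a ≠ 0 := sub_ne_zero.mpr (Ne.symm hab)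
    have hid : (a - q)/(a - b) = t := by
      rw [htdef, ← neg_sub q a, ← neg_sub b a, neg_div_neg_eq]
    have ht01 : 0 ≤ t ∧ t ≤ 1 := by
      rcases lt_or_gt_of_ne hab with h | h
      · rw [min_eq_left h.le] at hq1; rw [max_eq_right h.le] at hq2
        constructor
        · apply div_nonneg <;> linarith
        · rw [div_le_one (by linarith)]; linarith
      · rw [min_eq_right h.le] at hq1; rw [max_eq_left h.le] at hq2
        rw [← hid]
        constructor
        · apply div_nonneg <;> linarith
        · rw [div_le_one (by linarith)]; linarith
    set χ : X →L[ℝ] ℝ := (1 - t) • φ + t • (WeakDual.toStrongDual ψ') with hχ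
    have hχapp : ∀ x : X, χ x = (1 - t) * ψM x + t * ψ' x := fun x => rfl
    have hχY : ∀ y : Y, χ (y : X) = ys y := by
      intro y
      rw [hχapp]
      have h1 : ψM (y : X) = ys y := hψMExt.2 y
      have h2 : ψ' (y : X) = ys y := hψ'Ext.2 y
      rw [h1, h2]; ring
    have hχnorm : ‖χ‖ ≤ 1 := by
      have hn1 : ‖φ‖ ≤ 1 := hψMExt.1
      have hn2 : ‖WeakDual.toStrongDual ψ'‖ ≤ 1 := hψ'Ext.1
      calc ‖χ‖ ≤ ‖(1 - t) • φ‖ + ‖t • (WeakDual.toStrongDual ψ')‖ := norm_add_le _ _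
      _ = |1 - t| * ‖φ‖ + |t| * ‖WeakDual.toStrongDual ψ'‖ := by
          rw [norm_smul (1 - t) φ, norm_smul t (WeakDual.toStrongDual ψ')]
          rfl
      _ ≤ (1 - t) * 1 + t * 1 := by
          rw [abs_of_nonneg (by linarith [ht01.2] : (0:ℝ) ≤ 1 - t),
            abs_of_nonneg ht01.1]
          gcongr <;> linarith [ht01.1, ht01.2]
      _ = 1 := by ring
    have hχM : ∀ p ∈ M, χ p.1 = p.2 := by
      intro p hp
      have h1 : ψM p.1 = p.2 := hψMval p hp
      have h2 : ψ' p.1 = ψM p.1 := hψ'ag p.1 ⟨p, hp, rfl⟩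
      rw [hχapp, h2, h1]; ring
    have hχd : χ d = q := by
      have hmul : t * (b - a) = q - a := by
        rw [htdef]; exact div_mul_cancel₀ _ hba
      rw [hχapp]
      calc (1 - t) * ψM d + t * ψ' d = a + t * (b - a) := by rw [← ha, ← hb]; ring
      _ = q := by rw [hmul]; ring
    have hM' : insert (d, q) M ∈ 𝒮 := by
      constructor
      · intro p hp
        rcases Set.mem_insert_iff.mp hp with rfl | hp
        · exact ⟨hdD, hqS⟩
        · exact hMDS p hp
      · refine ⟨StrongDual.toWeakDual χ, ⟨hχnorm, hχY⟩, ?_⟩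
        intro p hp
        rcases Set.mem_insert_iff.mp hp with rfl | hp
        · exact hχd
        · exact hχM p hp
    have hsub : insert (d, q) M ⊆ M := hMmax.2 hM' (Set.subset_insert _ _)
    exact hdE ⟨(d, q), hsub (Set.mem_insert _ _), rfl⟩
  have hfS : ∀ x ∈ E, φ x ∈ S := by
    rintro x ⟨p, hp, rfl⟩
    rw [show φ p.1 = p.2 from hψMval p hp]
    exact (hMDS p hp).2
  have hSne : S.Nonempty := by
    obtain ⟨q, hq, -⟩ := hSd 0 1 one_pos
    exact ⟨q, hq⟩
  obtain ⟨r, hrS, hrcard⟩ := exists_fiber_card hcf hSc hSne (fun x => φ x) hfS hEκ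
  exact ⟨φ, norm_eq_one_of_mem_extSet hys hψMExt, hψMExt.2,
    {x ∈ E | φ x = r}, fun x hx => hED hx.1, hrcard, r, hrS, fun d hd => hd.2⟩

end AuxOvercomplete

set_option maxHeartbeats 1000000 in
set_option synthInstance.maxHeartbeats 400000 in
/-- `κ` of uncountable cofinality, `X` of density `κ`, `Y ⊆ X` closed of
density `< κ`, `y* ∈ S_{Y*}` with all its norm-one extensions of character `κ` in the dual
ball; if `D ⊆ X` has cardinality `κ` and stays linearly dense after removing any `< κ`
elements, then some norm-one functional is constant on a `κ`-sized subset of `D`;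
consequently `X` has no overcomplete set. -/
theorem stmt19 {X : Type u} [NormedAddCommGroup X] [NormedSpace ℝ X] [CompleteSpace X]
    {κ : Cardinal.{u}} (hcf : Cardinal.aleph0 < (κ.ord).cof) (hdens : dens X = κ)
    (Y : Submodule ℝ X) (hYc : IsClosed (Y : Set X)) (hYd : dens Y < κ)
    (ys : Y →L[ℝ] ℝ) (hys : ‖ys‖ = 1)
    (hchar : ∀ φ : X →L[ℝ] ℝ, ‖φ‖ = 1 → (∀ y : Y, φ (y : X) = ys y) →
      relChar (dualBall X) (StrongDual.toWeakDual φ) = κ)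
    (D : Set X) (hDcard : Cardinal.mk ↥D = κ)
    (hDdense : ∀ E ⊆ D, Cardinal.mk ↥E < κ → LinearlyDense (D \ E)) :
    (∃ (φ : X →L[ℝ] ℝ) (D' : Set X) (r : ℝ), ‖φ‖ = 1 ∧ D' ⊆ D ∧
      Cardinal.mk ↥D' = κ ∧ ∀ d ∈ D', φ d = r) ∧
    ¬ ∃ Z : Set X, Overcomplete Z := by
  have hκ0 : (ℵ₀ : Cardinal.{u}) < κ := hcf.trans_le (Ordinal.cof_ord_le κ)
  have hQc : (Set.range ((↑) : ℚ → ℝ)).Countable := Set.countable_range _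
  have hQd : ∀ a b : ℝ, a < b → ∃ q ∈ Set.range ((↑) : ℚ → ℝ), a < q ∧ q < b := by
    intro a b hab
    obtain ⟨q, hq1, hq2⟩ := exists_rat_btwn hab
    exact ⟨q, ⟨q, rfl⟩, hq1, hq2⟩
  constructor
  · obtain ⟨φ, hn, -, D', hD'D, hD'c, r, -, hr⟩ :=
      key_lemma hcf Y hYd ys hys hchar D hDcard hDdense _ hQc hQd
    exact ⟨φ, D', r, hn, hD'D, hD'c, hr⟩
  · rintro ⟨Z, hZc, hZd⟩
    rw [hdens] at hZc
    have hdiff : ∀ (W : Set X), #↥W = κ → ∀ E ⊆ W, #↥E < κ → #↥(W \ E) = κ := by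
      intro W hWc E hEW hEκ
      refine le_antisymm ((mk_le_mk_of_subset Set.diff_subset).trans hWc.le) ?_
      by_contra hlt
      rw [not_le] at hlt
      have h1 : #↥W ≤ #↥(W \ E) + #↥E :=
        (mk_le_mk_of_subset (Set.subset_diff_union W E)).trans (mk_union_le _ _)
      rw [hWc] at h1
      exact absurd (lt_of_le_of_lt h1 (Cardinal.add_lt_of_lt hκ0.le hlt hEκ)) (lt_irrefl κ)
    have hZdense : ∀ E ⊆ Z, #↥E < κ → LinearlyDense (Z \ E) := by
      intro E hE hEc
      exact hZd _ Set.diff_subset (by rw [hdiff Z hZc E hE hEc, hZc])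
    obtain ⟨φ, hφn, hφext, Z', hZ'Z, hZ'c, r, hrQ, hφr⟩ :=
      key_lemma hcf Y hYd ys hys hchar Z hZc hZdense _ hQc hQd
    set S₂ : Set ℝ := {x | x ∈ Set.range ((↑) : ℚ → ℝ) ∧ x ≠ r} with hS₂
    have hS₂c : S₂.Countable := hQc.mono (fun x hx => hx.1)
    have hS₂d : ∀ a b : ℝ, a < b → ∃ q ∈ S₂, a < q ∧ q < b := by
      intro a b hab
      obtain ⟨q1, hq1r, hq1a, hq1b⟩ := hQd a b hab
      obtain ⟨q2, hq2r, hq2a, hq2b⟩ := hQd a q1 hq1a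
      rcases eq_or_ne q1 r with rfl | hq1ne
      · refine ⟨q2, ⟨hq2r, ?_⟩, hq2a, hq2b.trans hq1b⟩
        intro h
        rw [h] at hq2b
        exact absurd hq2b (lt_irrefl _)
      · exact ⟨q1, ⟨hq1r, hq1ne⟩, hq1a, hq1b⟩
    have hZ'dense : ∀ E ⊆ Z', #↥E < κ → LinearlyDense (Z' \ E) := by
      intro E hE hEc
      refine hZd _ (Set.diff_subset.trans hZ'Z) ?_
      rw [hdiff Z' hZ'c E hE hEc, hZc]
    obtain ⟨ψ, hψn, hψext, Z'', hZ''Z', hZ''c, sv, hsv, hψs⟩ :=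
      key_lemma hcf Y hYd ys hys hchar Z' hZ'c hZ'dense S₂ hS₂c hS₂d
    have hsr : sv ≠ r := hsv.2
    set h : X →L[ℝ] ℝ := sv • φ - r • ψ with hh
    have hvan : ∀ x ∈ Z'', h x = 0 := by
      intro x hx
      have h1 : φ x = r := hφr x (hZ''Z' hx)
      have h2 : ψ x = sv := hψs x hx
      simp only [hh, ContinuousLinearMap.sub_apply, ContinuousLinearMap.smul_apply,
        smul_eq_mul]
      rw [h1, h2]
      ring
    have hld : LinearlyDense Z'' := hZd _ (hZ''Z'.trans hZ'Z) (by rw [hZ''c, hZc])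
    have hzero : h = 0 := eq_zero_of_vanish_linearlyDense hld hvan
    have hsφ : sv • φ = r • ψ := by
      have := sub_eq_zero.mp hzero
      exact this
    rcases eq_or_ne r 0 with rfl | hr0
    · have hφ0 : φ = 0 := by
        rw [zero_smul] at hsφ
        calc φ = sv⁻¹ • (sv • φ) := by
              rw [smul_smul, inv_mul_cancel₀ hsr, one_smul]
        _ = 0 := by rw [hsφ, smul_zero]
      rw [hφ0, norm_zero] at hφn
      exact one_ne_zero hφn.symm
    · have hψeq : ψ = (r⁻¹ * sv) • φ := by
        have h2 : r⁻¹ • (sv • φ) = ψ := by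
          rw [hsφ, smul_smul, inv_mul_cancel₀ hr0, one_smul]
        rw [← h2, smul_smul]
      have habs : |r⁻¹ * sv| = 1 := by
        have hnn : ‖ψ‖ = |r⁻¹ * sv| * ‖φ‖ := by
          rw [hψeq, norm_smul (r⁻¹ * sv) φ]; rfl
        rw [hψn, hφn, mul_one] at hnn
        exact hnn.symm
      have hsvabs : |sv| = |r| := by
        rw [abs_mul, abs_inv] at habs
        have hrne : |r| ≠ 0 := abs_ne_zero.mpr hr0
        field_simp at habs
        linarith [habs]
      have hsvr : sv = -r := (abs_eq_abs.mp hsvabs).resolve_left hsr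
      have hψφ : ψ = -φ := by
        rw [hψeq, hsvr]
        have hc : r⁻¹ * -r = -1 := by field_simp
        rw [hc]; exact neg_one_smul ℝ φ
      have hys0 : ys = 0 := by
        ext y
        have h1 : ψ (y : X) = ys y := hψext y
        have h2 : φ (y : X) = ys y := hφext y
        have h3 : ψ (y : X) = -(φ (y : X)) := by
          rw [hψφ, ContinuousLinearMap.neg_apply]
        simp only [ContinuousLinearMap.zero_apply]
        linarith
      have : ‖ys‖ = 0 := by rw [hys0]; exact norm_zero (E := ↥Y →L[ℝ] ℝ)
      rw [hys] at this
      exact one_ne_zero this
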